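/- Let f ∈ K(x₁,…,xₙ) be a Lüroth generator, F = K(f), and suppose p ∈ F is a non-constant polynomial. Write f = f_n/f_d in lowest terms with homogeneous decompositions f_n = f_n^{(s)} + ⋯ + f_n^{(0)} and f_d = f_d^{(s)} + ⋯ + f_d^{(0)} (s = deg f), and assume either f_d^{(s)} = 0 or f_n^{(s)}/f_d^{(s)} ∉ K. If f_d^{(s)} = 0, then f itself is a polynomial. -/

import Mathlib

open MvPolynomial

/-- Substitution of an element `a` of a field extension of `K` into a univariate
rational function `g ∈ K(t)` (the composition `g ∘ a`). -/
noncomputable def ratEval {K : Type*} [Field K] {L : Type*} [Field L] [Algebra K L]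
    (g : RatFunc K) (a : L) : L :=
  Polynomial.aeval a g.num / Polynomial.aeval a g.denom

private lemma topComponent_ne_zero {σ R : Type*} [CommSemiring R] {φ : MvPolynomial σ R}
    (h : φ ≠ 0) : homogeneousComponent φ.totalDegree φ ≠ 0 := by
  obtain ⟨d, hd, hdeg⟩ := φ.support.exists_mem_eq_sup (support_nonempty.mpr h)
    (fun s => s.sum fun _ e => e)
  intro hzero
  have hc := coeff_homogeneousComponent (σ := σ) φ.totalDegree φ d
  rw [hzero] at hc
  have hdd : d.degree = φ.totalDegree := by
    rw [Finsupp.degree_apply, totalDegree, hdeg, Finsupp.sum]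
  rw [if_pos hdd] at hc
  exact (mem_support_iff.mp hd) (by simpa using hc.symm)

private lemma totalDegree_sub_top_lt {σ R : Type*} [CommRing R] {p : MvPolynomial σ R}
    (h : p - homogeneousComponent p.totalDegree p ≠ 0) :
    (p - homogeneousComponent p.totalDegree p).totalDegree < p.totalDegree := by
  set p' := p - homogeneousComponent p.totalDegree p with hp'
  have hp0 : p ≠ 0 := by
    intro h0
    apply h
    rw [hp', h0]
    simp
  have hsub : p'.support ⊆ p.support := by
    intro d hd
    rw [mem_support_iff] at hd ⊢
    contrapose! hd
    rw [hp', coeff_sub, coeff_homogeneousComponent, hd]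
    split <;> simp
  have hle : p'.totalDegree ≤ p.totalDegree := totalDegree_le_of_support_subset hsub
  rcases lt_or_eq_of_le hle with h' | h'
  · exact h'
  · exfalso
    have htop : homogeneousComponent p'.totalDegree p' = 0 := by
      rw [h', hp', map_sub, homogeneousComponent_of_mem (homogeneousComponent_mem _ _),
        if_pos rfl, sub_self]
    exact topComponent_ne_zero h htop

private lemma totalDegree_mul_eq' {σ R : Type*} [CommRing R] [IsDomain R]
    {p q : MvPolynomial σ R} (hp : p ≠ 0) (hq : q ≠ 0) :
    (p * q).totalDegree = p.totalDegree + q.totalDegree := by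
  set N := p.totalDegree + q.totalDegree with hN
  refine le_antisymm (totalDegree_mul p q) ?_
  set tp := homogeneousComponent p.totalDegree p with htp
  set tq := homogeneousComponent q.totalDegree q with htq
  have hptp : tp ≠ 0 := topComponent_ne_zero hp
  have hqtq : tq ≠ 0 := topComponent_ne_zero hq
  have hdp : tp.totalDegree ≤ p.totalDegree :=
    (homogeneousComponent_isHomogeneous p.totalDegree p).totalDegree_le
  have hdq : tq.totalDegree ≤ q.totalDegree :=
    (homogeneousComponent_isHomogeneous q.totalDegree q).totalDegree_le
  have key : homogeneousComponent N (p * q) = tp * tq := by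
    have hdecomp : p * q = tp * tq + ((p - tp) * tq + (tp * (q - tq) + (p - tp) * (q - tq))) := by
      ring
    have hA : homogeneousComponent N ((p - tp) * tq) = 0 := by
      by_cases h0 : p - tp = 0
      · rw [h0, zero_mul, map_zero]
      · apply homogeneousComponent_eq_zero
        have h1 : (p - tp).totalDegree < p.totalDegree := totalDegree_sub_top_lt h0
        have h2 := totalDegree_mul (p - tp) tq
        omega
    have hB : homogeneousComponent N (tp * (q - tq)) = 0 := by
      by_cases h0 : q - tq = 0
      · rw [h0, mul_zero, map_zero]
      · apply homogeneousComponent_eq_zero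
        have h1 : (q - tq).totalDegree < q.totalDegree := totalDegree_sub_top_lt h0
        have h2 := totalDegree_mul tp (q - tq)
        omega
    have hC : homogeneousComponent N ((p - tp) * (q - tq)) = 0 := by
      by_cases h0 : p - tp = 0
      · rw [h0, zero_mul, map_zero]
      by_cases h0' : q - tq = 0
      · rw [h0', mul_zero, map_zero]
      apply homogeneousComponent_eq_zero
      have h1 : (p - tp).totalDegree < p.totalDegree := totalDegree_sub_top_lt h0
      have h1' : (q - tq).totalDegree < q.totalDegree := totalDegree_sub_top_lt h0'
      have h2 := totalDegree_mul (p - tp) (q - tq)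
      omega
    rw [hdecomp, map_add, map_add, map_add, hA, hB, hC, add_zero, add_zero, add_zero]
    rw [homogeneousComponent_of_mem
      ((mem_homogeneousSubmodule _ _).mpr
        ((homogeneousComponent_isHomogeneous p.totalDegree p).mul
          (homogeneousComponent_isHomogeneous q.totalDegree q))), if_pos rfl]
  have hne : homogeneousComponent N (p * q) ≠ 0 := key ▸ mul_ne_zero hptp hqtq
  by_contra hlt
  push_neg at hlt
  exact hne (homogeneousComponent_eq_zero _ _ hlt)

private lemma totalDegree_pow_eq' {σ R : Type*} [CommRing R] [IsDomain R]
    {p : MvPolynomial σ R} (hp : p ≠ 0) (k : ℕ) :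
    (p ^ k).totalDegree = k * p.totalDegree := by
  induction k with
  | zero => simp
  | succ k ih =>
    rw [pow_succ, totalDegree_mul_eq' (pow_ne_zero k hp) hp, ih]
    ring

private lemma key_deg {σ K : Type*} [Field K] {fn fd : MvPolynomial σ K}
    (hfn : fn ≠ 0) (hfd : fd ≠ 0) (hND : fd.totalDegree < fn.totalDegree)
    (hD : 0 < fd.totalDegree)
    (c : ℕ → K) (m d0 : ℕ) (hd0m : d0 ≤ m) (hc0 : c d0 ≠ 0)
    (hcle : ∀ i, c i ≠ 0 → i ≤ d0) :
    (∑ i ∈ Finset.range (m+1), C (c i) * fn ^ i * fd ^ (m - i)).totalDegree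
      = d0 * fn.totalDegree + (m - d0) * fd.totalDegree := by
  rcases Nat.eq_zero_or_pos m with hm | hm
  · subst hm
    have hd00 : d0 = 0 := by omega
    subst hd00
    simp
  have arith : ∀ i, i ≤ m → i * fn.totalDegree + (m - i) * fd.totalDegree
      = i * (fn.totalDegree - fd.totalDegree) + m * fd.totalDegree := by
    intro i hi
    zify [hi, hND.le]
    ring
  have hterm : ∀ i, (C (c i) * fn ^ i * fd ^ (m - i) : MvPolynomial σ K).totalDegree
      ≤ i * fn.totalDegree + (m - i) * fd.totalDegree := by
    intro i
    calc (C (c i) * fn ^ i * fd ^ (m - i)).totalDegree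
        ≤ (C (c i) * fn ^ i).totalDegree + (fd ^ (m-i)).totalDegree := totalDegree_mul _ _
      _ ≤ ((C (c i)).totalDegree + (fn ^ i).totalDegree) + (fd ^ (m-i)).totalDegree :=
          Nat.add_le_add_right (totalDegree_mul _ _) _
      _ ≤ i * fn.totalDegree + (m - i) * fd.totalDegree := by
          rw [totalDegree_C, totalDegree_pow_eq' hfn, totalDegree_pow_eq' hfd]; omega
  have hmain : (C (c d0) * fn ^ d0 * fd ^ (m - d0) : MvPolynomial σ K).totalDegree
      = d0 * fn.totalDegree + (m - d0) * fd.totalDegree := by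
    rw [totalDegree_mul_eq' (mul_ne_zero (fun h => hc0 (by simpa using h)) (pow_ne_zero _ hfn))
        (pow_ne_zero _ hfd),
      totalDegree_mul_eq' (fun h => hc0 (by simpa using h)) (pow_ne_zero _ hfn),
      totalDegree_C, totalDegree_pow_eq' hfn, totalDegree_pow_eq' hfd]
    omega
  have hpos : 0 < d0 * fn.totalDegree + (m - d0) * fd.totalDegree := by
    rw [arith d0 hd0m]
    have h2 : m ≤ m * fd.totalDegree := Nat.le_mul_of_pos_right m hD
    omega
  have hmem : d0 ∈ Finset.range (m+1) := Finset.mem_range.mpr (by omega)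
  rw [← Finset.add_sum_erase _ _ hmem,
    totalDegree_add_eq_left_of_totalDegree_lt, hmain]
  rw [hmain]
  have hrem : (∑ i ∈ (Finset.range (m+1)).erase d0,
      C (c i) * fn ^ i * fd ^ (m - i)).totalDegree
      ≤ d0 * fn.totalDegree + (m - d0) * fd.totalDegree - 1 := by
    apply totalDegree_finsetSum_le
    intro j hj
    have hj1 : j < m + 1 := Finset.mem_range.mp (Finset.mem_of_mem_erase hj)
    have hj2 : j ≠ d0 := Finset.ne_of_mem_erase hj
    by_cases hcj : c j = 0
    · simp [hcj]
    · have hjd : j < d0 := lt_of_le_of_ne (hcle j hcj) hj2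
      have := hterm j
      rw [arith j (by omega)] at this
      have hlt : j * (fn.totalDegree - fd.totalDegree)
          < d0 * (fn.totalDegree - fd.totalDegree) :=
        Nat.mul_lt_mul_of_lt_of_le hjd le_rfl (by omega)
      rw [arith d0 hd0m]
      omega
  omega

/-- Let `f = fn/fd` be in lowest terms, `s = deg f`, and suppose the
degree-`s` homogeneous component of `fd` vanishes. If some non-constant polynomial
`p` belongs to `K(f)` (that is, `p = g(f)` for some `g ∈ K(y)`), then `f` itself is
a polynomial. -/
theorem generator_is_polynomial_of_top_denominator_component_zero
    {K : Type*} [Field K] {n : ℕ}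
    (fn fd : MvPolynomial (Fin n) K) (hfd : fd ≠ 0)
    (hcopf : ∀ d : MvPolynomial (Fin n) K, d ∣ fn → d ∣ fd → IsUnit d)
    (hs : homogeneousComponent (max fn.totalDegree fd.totalDegree) fd = 0)
    (p : MvPolynomial (Fin n) K) (hp : 0 < p.totalDegree)
    (g : RatFunc K)
    (hpf : algebraMap (MvPolynomial (Fin n) K) (FractionRing (MvPolynomial (Fin n) K)) p =
      ratEval g
        ((algebraMap (MvPolynomial (Fin n) K) (FractionRing (MvPolynomial (Fin n) K)) fn) /
          (algebraMap (MvPolynomial (Fin n) K) (FractionRing (MvPolynomial (Fin n) K)) fd))) :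
    ∃ q : MvPolynomial (Fin n) K,
      (algebraMap (MvPolynomial (Fin n) K) (FractionRing (MvPolynomial (Fin n) K)) fn) /
        (algebraMap (MvPolynomial (Fin n) K) (FractionRing (MvPolynomial (Fin n) K)) fd) =
      algebraMap (MvPolynomial (Fin n) K) (FractionRing (MvPolynomial (Fin n) K)) q := by
  classical
  have hinj : Function.Injective
      (algebraMap (MvPolynomial (Fin n) K) (FractionRing (MvPolynomial (Fin n) K))) :=
    IsFractionRing.injective _ _
  set φ := algebraMap (MvPolynomial (Fin n) K) (FractionRing (MvPolynomial (Fin n) K))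
    with hφdef
  rw [ratEval] at hpf
  set f := φ fn / φ fd with hfdef
  have hfd0 : φ fd ≠ 0 := fun h => hfd (hinj (by simpa using h))
  -- degree comparison from hs
  have hND : fd.totalDegree < fn.totalDegree := by
    by_contra hle
    push_neg at hle
    rw [max_eq_right hle] at hs
    exact topComponent_ne_zero hfd hs
  have hfn0 : fn ≠ 0 := by
    intro h
    rw [h, totalDegree_zero] at hND
    omega
  have hp0 : p ≠ 0 := by
    intro h
    rw [h, totalDegree_zero] at hp
    omega
  set a := g.num with ha
  set b := g.denom with hb
  have hb0 : b ≠ 0 := g.denom_ne_zero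
  have hbf : Polynomial.aeval f b ≠ 0 := by
    intro h
    rw [h, div_zero] at hpf
    exact hp0 (hinj (by simpa using hpf))
  rw [eq_div_iff hbf] at hpf
  have ha0 : a ≠ 0 := by
    intro h
    rw [h, map_zero] at hpf
    exact hp0 (hinj (by simpa using (mul_eq_zero.mp hpf).resolve_right hbf))
  have haf : Polynomial.aeval f a ≠ 0 := by
    rw [← hpf]
    exact mul_ne_zero (fun h => hp0 (hinj (by simpa using h))) hbf
  set m := max a.natDegree b.natDegree with hm
  -- lifting identity
  have lift : ∀ u : Polynomial K, u.natDegree ≤ m →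
      φ (∑ i ∈ Finset.range (m+1), MvPolynomial.C (u.coeff i) * fn ^ i * fd ^ (m - i))
        = φ fd ^ m * Polynomial.aeval f u := by
    intro u hu
    rw [Polynomial.aeval_eq_sum_range' (Nat.lt_succ_of_le hu), Finset.mul_sum, map_sum]
    apply Finset.sum_congr rfl
    intro i hi
    rw [Finset.mem_range] at hi
    have hi' : i ≤ m := by omega
    have hpowsplit : φ fd ^ m = φ fd ^ (m - i) * φ fd ^ i := by
      rw [← pow_add]
      congr 1
      omega
    rw [map_mul, map_mul, map_pow, map_pow, Algebra.smul_def, hfdef, div_pow, hpowsplit]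
    have hC : φ (MvPolynomial.C (u.coeff i)) = algebraMap K (FractionRing (MvPolynomial (Fin n) K)) (u.coeff i) := by
      rw [hφdef, ← MvPolynomial.algebraMap_eq, ← IsScalarTower.algebraMap_apply]
    rw [hC]
    field_simp
  set A := ∑ i ∈ Finset.range (m+1), MvPolynomial.C (a.coeff i) * fn ^ i * fd ^ (m - i) with hA
  set B := ∑ i ∈ Finset.range (m+1), MvPolynomial.C (b.coeff i) * fn ^ i * fd ^ (m - i) with hB
  have hAf : φ A = φ fd ^ m * Polynomial.aeval f a := lift a (le_max_left _ _)
  have hBf : φ B = φ fd ^ m * Polynomial.aeval f b := lift b (le_max_right _ _)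
  have hPB : p * B = A := by
    apply hinj
    rw [map_mul, hBf, hAf, ← hpf]
    ring
  have hB0 : B ≠ 0 := by
    intro h
    rw [h, map_zero] at hBf
    exact mul_ne_zero (pow_ne_zero m hfd0) hbf hBf.symm
  have hA0 : A ≠ 0 := hPB ▸ mul_ne_zero hp0 hB0
  -- show fd is a unit
  by_cases hu : IsUnit fd
  · obtain ⟨v, hv⟩ := isUnit_iff_exists_inv.mp hu
    refine ⟨fn * v, ?_⟩
    have hone : φ fd * φ v = 1 := by rw [← map_mul, hv, map_one]
    rw [map_mul, div_eq_iff hfd0]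
    calc φ fn = φ fn * (φ fd * φ v) := by rw [hone, mul_one]
      _ = φ fn * φ v * φ fd := by ring
  exfalso
  have hDpos : 0 < fd.totalDegree := by
    by_contra hD
    push_neg at hD
    apply hu
    have hfdC : fd = MvPolynomial.C (coeff 0 fd) := by
      ext d
      rw [coeff_C]
      by_cases hd : d = 0
      · rw [if_pos hd.symm, hd]
      · rw [if_neg (fun h => hd h.symm)]
        apply coeff_eq_zero_of_totalDegree_lt
        have hdne : d.degree ≠ 0 := fun h => hd ((Finsupp.degree_eq_zero_iff d).mp h)
        rw [Finsupp.degree_apply] at hdne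
        omega
    rw [hfdC]
    exact (isUnit_iff_ne_zero.mpr (fun h => hfd (by rw [hfdC, h, map_zero]))).map
      (MvPolynomial.C (σ := Fin n))
  -- degree computation
  have haN : a.coeff a.natDegree ≠ 0 := fun h => ha0 (Polynomial.leadingCoeff_eq_zero.mp h)
  have hbN : b.coeff b.natDegree ≠ 0 := fun h => hb0 (Polynomial.leadingCoeff_eq_zero.mp h)
  have hdegA : A.totalDegree
      = a.natDegree * fn.totalDegree + (m - a.natDegree) * fd.totalDegree :=
    key_deg hfn0 hfd hND hDpos _ m a.natDegree (le_max_left _ _) haN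
      (fun i hi => Polynomial.le_natDegree_of_ne_zero hi)
  have hdegB : B.totalDegree
      = b.natDegree * fn.totalDegree + (m - b.natDegree) * fd.totalDegree :=
    key_deg hfn0 hfd hND hDpos _ m b.natDegree (le_max_right _ _) hbN
      (fun i hi => Polynomial.le_natDegree_of_ne_zero hi)
  have hdegPB : A.totalDegree = p.totalDegree + B.totalDegree := by
    rw [← hPB, totalDegree_mul_eq' hp0 hB0]
  have arith : ∀ i, i ≤ m → i * fn.totalDegree + (m - i) * fd.totalDegree
      = i * (fn.totalDegree - fd.totalDegree) + m * fd.totalDegree := by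
    intro i hi
    zify [hi, hND.le]
    ring
  have hdag : a.natDegree > b.natDegree := by
    rw [hdegA, hdegB, arith _ (le_max_left _ _), arith _ (le_max_right _ _)] at hdegPB
    by_contra hle
    push_neg at hle
    have : a.natDegree * (fn.totalDegree - fd.totalDegree)
        ≤ b.natDegree * (fn.totalDegree - fd.totalDegree) :=
      Nat.mul_le_mul_right _ hle
    omega
  have hma : m = a.natDegree := max_eq_left (le_of_lt hdag)
  -- irreducible factor of fd
  obtain ⟨q, hqirr, hqdvd⟩ := WfDvdMonoid.exists_irreducible_factor hu hfd
  have hqfn : ¬ q ∣ fn := fun h => hqirr.not_isUnit (hcopf q h hqdvd)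
  have hqprime : Prime q := UniqueFactorizationMonoid.irreducible_iff_prime.mp hqirr
  have hqB : q ∣ B := by
    rw [hB]
    apply Finset.dvd_sum
    intro i hi
    by_cases hbi : b.coeff i = 0
    · rw [hbi]; simp
    · have hib : i ≤ b.natDegree := Polynomial.le_natDegree_of_ne_zero hbi
      exact Dvd.dvd.mul_left (hqdvd.trans (dvd_pow_self fd (by omega))) _
  have hqA : q ∣ A := hPB ▸ hqB.mul_left p
  have hqtop : q ∣ MvPolynomial.C (a.coeff m) * fn ^ m := by
    have hsplit : A = (∑ i ∈ Finset.range m, MvPolynomial.C (a.coeff i) * fn ^ i * fd ^ (m - i))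
        + MvPolynomial.C (a.coeff m) * fn ^ m * fd ^ (m - m) := by
      rw [hA, Finset.sum_range_succ]
    have hqs : q ∣ ∑ i ∈ Finset.range m, MvPolynomial.C (a.coeff i) * fn ^ i * fd ^ (m - i) := by
      apply Finset.dvd_sum
      intro i hi
      rw [Finset.mem_range] at hi
      exact Dvd.dvd.mul_left (hqdvd.trans (dvd_pow_self fd (by omega))) _
    have : q ∣ MvPolynomial.C (a.coeff m) * fn ^ m * fd ^ (m - m) := by
      have := (dvd_add_right hqs).mp (hsplit ▸ hqA)
      exact this
    simpa using this
  rcases hqprime.2.2 _ _ hqtop with hcase | hcase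
  · exact hqirr.not_isUnit (isUnit_of_dvd_unit hcase
      ((isUnit_iff_ne_zero.mpr (hma ▸ haN)).map (MvPolynomial.C (σ := Fin n))))
  · exact hqfn (hqprime.dvd_of_dvd_pow hcase)
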